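/- Let L₁, L₂ be unit circles in ℝ² whose centres are at distance d with δ^{1/2} ≤ d ≤ 2 - δ^{1/2}, where 0 < δ < 10⁻⁴. Then the set of points on L₁ at distance at most δ from L₂ can be covered by two rectangles of dimensions 2δ × 100δ^{1/2}. -/

import Mathlib

open Metric Set Real

/-- `R` is a rectangle of dimensions `a × b`: an isometric copy of `[0,a] × [0,b]`. -/
def IsRectangle (R : Set (EuclideanSpace ℝ (Fin 2))) (a b : ℝ) : Prop :=
  ∃ f : EuclideanSpace ℝ (Fin 2) ≃ᵢ EuclideanSpace ℝ (Fin 2),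
    R = f '' {x | x 0 ∈ Set.Icc 0 a ∧ x 1 ∈ Set.Icc 0 b}

namespace NearIntAux

noncomputable def phi : ℂ ≃ₗᵢ[ℝ] EuclideanSpace ℝ (Fin 2) :=
  Complex.orthonormalBasisOneI.repr

/-- The rigid motion of `ℂ` given by `z ↦ w + u z`, for `‖u‖ = 1`. -/
noncomputable def cIso (w u : ℂ) (hu : ‖u‖ = 1) : ℂ ≃ᵢ ℂ := by
  have hn : Complex.normSq u = 1 := by
    have h : ‖u‖ = 1 := by exact hu
    rw [Complex.normSq_eq_norm_sq, h]; norm_num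
  have h1 : (starRingEnd ℂ) u * u = 1 := by
    rw [mul_comm, Complex.mul_conj, hn]; norm_num
  exact
  { toFun := fun z => w + u * z
    invFun := fun z => (starRingEnd ℂ) u * (z - w)
    left_inv := fun z => by linear_combination z * h1
    right_inv := fun z => by linear_combination (z - w) * h1
    isometry_toFun := Isometry.of_dist_eq fun a b => by
      rw [dist_eq_norm, dist_eq_norm,
        show w + u * a - (w + u * b) = u * (a - b) by ring, norm_mul, hu, one_mul] }

/-- The induced rigid motion on `EuclideanSpace ℝ (Fin 2)`. -/
noncomputable def vIso (w u : ℂ) (hu : ‖u‖ = 1) :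
    EuclideanSpace ℝ (Fin 2) ≃ᵢ EuclideanSpace ℝ (Fin 2) :=
  (phi.symm.toIsometryEquiv.trans (cIso w u hu)).trans phi.toIsometryEquiv

lemma mem_rect {a b : ℝ} (w u : ℂ) (hu : ‖u‖ = 1) (z : ℂ)
    (hre : ((starRingEnd ℂ) u * (z - w)).re ∈ Set.Icc 0 a)
    (him : ((starRingEnd ℂ) u * (z - w)).im ∈ Set.Icc 0 b) :
    phi z ∈ vIso w u hu '' {x | x 0 ∈ Set.Icc 0 a ∧ x 1 ∈ Set.Icc 0 b} := by
  have hn : Complex.normSq u = 1 := by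
    have h : ‖u‖ = 1 := by exact hu
    rw [Complex.normSq_eq_norm_sq, h]; norm_num
  have h1 : u * (starRingEnd ℂ) u = 1 := by rw [Complex.mul_conj, hn]; norm_num
  set ζ := (starRingEnd ℂ) u * (z - w) with hζ
  refine ⟨phi ζ, ⟨?_, ?_⟩, ?_⟩
  · have h2 : (phi ζ) 0 = ζ.re := by
      simp [phi, Complex.orthonormalBasisOneI_repr_apply]
    rw [h2]; exact hre
  · have h2 : (phi ζ) 1 = ζ.im := by
      simp [phi, Complex.orthonormalBasisOneI_repr_apply]
    rw [h2]; exact him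
  · show phi (w + u * (phi.symm (phi ζ))) = phi z
    rw [phi.symm_apply_apply]
    congr 1
    rw [hζ]
    linear_combination (z - w) * h1

lemma isRectangle_vIso (a b : ℝ) (w u : ℂ) (hu : ‖u‖ = 1) :
    IsRectangle (vIso w u hu '' {x | x 0 ∈ Set.Icc 0 a ∧ x 1 ∈ Set.Icc 0 b}) a b :=
  ⟨vIso w u hu, rfl⟩

/-! ### Real arithmetic lemmas -/

lemma x_range (δ s d r x y : ℝ) (hδ : δ = s^2) (hs0 : 0 < s) (hsd : s ≤ d)
    (hr0 : 0 ≤ r) (hr : |r - 1| ≤ δ) (hxy : x^2 + y^2 = 1)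
    (hr2 : r^2 = (x - d)^2 + y^2) : |x - d/2| ≤ s^2 * (2 + s^2) / (2*d) := by
  have hd0 : 0 < d := lt_of_lt_of_le hs0 hsd
  have hδ0 : 0 < δ := by rw [hδ]; positivity
  rw [abs_le] at hr
  rw [le_div_iff₀ (by positivity)]
  have e1 : (x - d/2) * (2*d) = 1 - r^2 + (x^2 + y^2 - 1) - 0 := by
    rw [hr2]; ring
  rw [hxy] at e1
  have e1' : (x - d/2) * (2*d) = 1 - r^2 := by linarith [e1]
  have habs : |x - d/2| * (2*d) = |1 - r^2| := by
    rw [← abs_of_pos (show (0:ℝ) < 2*d by positivity), ← abs_mul, e1']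
  rw [habs]
  rw [abs_le]
  constructor <;> nlinarith [hr.1, hr.2, hr0, hδ0, hδ]

set_option maxHeartbeats 2000000 in
lemma key_ineq (s d h x y : ℝ) (hs0 : 0 < s) (hs1 : s < 1/100)
    (hsd : s ≤ d) (hd2 : d ≤ 2 - s) (hh0 : 0 ≤ h) (hh : h^2 = 1 - d^2/4)
    (hxy : x^2 + y^2 = 1) (hy : 0 ≤ y)
    (hx : |x - d/2| ≤ s^2 * (2 + s^2) / (2*d)) :
    (x - d/2)^2 + (y - h)^2 ≤ 2 * s^2 := by
  have hd0' : 0 < d := lt_of_lt_of_le hs0 hsd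
  rw [le_div_iff₀ (by positivity)] at hx
  set a := |x - d/2| with ha
  have ha0 : 0 ≤ a := abs_nonneg _
  have hs2 : s^2 < 1/10000 := by nlinarith
  have hsh : s ≤ 2 * h^2 := by nlinarith
  have hhpos : 0 < h := by nlinarith
  have had : a * d ≤ (101/100) * s^2 := by nlinarith [mul_pos hs0 hs0]
  have haa : a ≤ (101/100) * s := by nlinarith
  have hid : (y - h) * (y + h) = (d/2 - x) * (d/2 + x) := by linear_combination hxy - hh
  have hxpd : |d/2 + x| ≤ d + a := by
    have e3 : d/2 + x = d + (x - d/2) := by ring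
    rw [e3]
    calc |d + (x - d/2)| ≤ |d| + |x - d/2| := abs_add_le _ _
    _ = d + a := by rw [abs_of_pos hd0']
  have h5 : |y - h| * (y + h) ≤ a * (d + a) := by
    have e2 : |y - h| * (y + h) = |(y - h) * (y + h)| := by
      rw [abs_mul, abs_of_nonneg (by linarith : (0:ℝ) ≤ y + h)]
    rw [e2, hid, abs_mul, show |d/2 - x| = a by rw [ha, abs_sub_comm]]
    exact mul_le_mul_of_nonneg_left hxpd ha0
  have h6 : |y - h| * h ≤ a * (d + a) :=
    le_trans (by nlinarith [abs_nonneg (y - h)]) h5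
  have h7 : |y - h| * h ≤ (204/100) * s^2 := by nlinarith [had, haa, hs0, ha0]
  have h8 : (y - h)^2 * h^2 ≤ (2601/625) * s^4 := by
    have h7' := pow_le_pow_left₀ (by positivity) h7 2
    rw [mul_pow, sq_abs] at h7'
    rw [show ((204/100:ℝ)*s^2)^2 = (2601/625)*s^4 from by ring] at h7'
    exact h7'
  have h9 : (y - h)^2 * s ≤ (5202/625) * s^4 := by
    have t1 : (y - h)^2 * s ≤ (y - h)^2 * (2*h^2) :=
      mul_le_mul_of_nonneg_left hsh (sq_nonneg _)
    linarith [t1, h8]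
  have h10 : (y - h)^2 ≤ (9/100) * s^2 := by
    have t2 : s^4 ≤ (1/100) * s^3 := by nlinarith [mul_pos (mul_pos hs0 hs0) hs0]
    have t3 : (y - h)^2 * s ≤ ((9/100) * s^2) * s := by
      linarith [h9, t2, mul_pos (mul_pos hs0 hs0) hs0]
    exact le_of_mul_le_mul_right t3 hs0
  nlinarith [haa, h10, ha0, sq_abs (x - d/2), hs0]

lemma main_real (δ s d h x y : ℝ) (hδ : δ = s^2) (hs0 : 0 < s) (hs1 : s < 1/100)
    (hsd : s ≤ d) (hd2 : d ≤ 2 - s) (hh0 : 0 ≤ h) (hh : h^2 = 1 - d^2/4)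
    (hxy : x^2 + y^2 = 1) (hy : 0 ≤ y)
    (hx : |x - d/2| ≤ s^2 * (2 + s^2) / (2*d)) :
    (1 - δ ≤ d/2*x + h*y ∧ d/2*x + h*y ≤ 1 + δ) ∧ |d/2*y - h*x| ≤ 50*s := by
  have hq := key_ineq s d h x y hs0 hs1 hsd hd2 hh0 hh hxy hy hx
  have hQ0 : 0 ≤ (x - d/2)^2 + (y - h)^2 := by positivity
  have hm : d/2*x + h*y = 1 - ((x - d/2)^2 + (y - h)^2)/2 := by
    linear_combination (1/2) * hxy + (1/2) * hh
  have hm1 : 1 - δ ≤ d/2*x + h*y := by rw [hm, hδ]; linarith [hq]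
  have hm2 : d/2*x + h*y ≤ 1 + δ := by rw [hm, hδ]; nlinarith [hQ0]
  refine ⟨⟨hm1, hm2⟩, ?_⟩
  have hpyth : (d/2*y - h*x)^2 + (d/2*x + h*y)^2 = 1 := by
    linear_combination (d^2/4 + h^2) * hxy + hh
  rw [abs_le]
  constructor <;> nlinarith [hpyth, hm1, hm2, hs0, hs1, mul_pos hs0 hs0, hδ]

end NearIntAux

set_option maxHeartbeats 1600000 in
theorem near_intersection_covered_by_two_rectangles
    (δ : ℝ) (hδ : 0 < δ) (hδ' : δ < 1 / 10 ^ 4)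
    (c₁ c₂ : EuclideanSpace ℝ (Fin 2))
    (hd₁ : Real.sqrt δ ≤ dist c₁ c₂) (hd₂ : dist c₁ c₂ ≤ 2 - Real.sqrt δ) :
    ∃ R₁ R₂ : Set (EuclideanSpace ℝ (Fin 2)),
      IsRectangle R₁ (2 * δ) (100 * Real.sqrt δ) ∧
      IsRectangle R₂ (2 * δ) (100 * Real.sqrt δ) ∧
      {x ∈ Metric.sphere c₁ 1 | Metric.infDist x (Metric.sphere c₂ 1) ≤ δ} ⊆ R₁ ∪ R₂ := by
  open NearIntAux in
  set s := Real.sqrt δ with hsdef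
  have hs0 : 0 < s := Real.sqrt_pos.mpr hδ
  have hδs : δ = s^2 := (Real.sq_sqrt hδ.le).symm
  have hs1 : s < 1/100 := by nlinarith [hδs, Real.sqrt_nonneg δ]
  set d := dist c₁ c₂ with hddef
  have hsd : s ≤ d := hd₁
  have hd2 : d ≤ 2 - s := hd₂
  have hd0 : 0 < d := lt_of_lt_of_le hs0 hsd
  have hh2pos : (0:ℝ) < 1 - d^2/4 := by nlinarith
  set h := Real.sqrt (1 - d^2/4) with hhdef
  have hh0 : 0 ≤ h := Real.sqrt_nonneg _
  have hh : h^2 = 1 - d^2/4 := Real.sq_sqrt hh2pos.le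
  -- complex setup
  set z₁ := NearIntAux.phi.symm c₁ with hz₁def
  set z₂ := NearIntAux.phi.symm c₂ with hz₂def
  have hzd : ‖z₂ - z₁‖ = d := by
    rw [← dist_eq_norm, hz₁def, hz₂def, LinearIsometryEquiv.dist_map, dist_comm]
  set e : ℂ := (z₂ - z₁) / (d:ℂ) with hedef
  have hdC : (d:ℂ) ≠ 0 := Complex.ofReal_ne_zero.mpr hd0.ne'
  have he : ‖e‖ = 1 := by
    rw [hedef, norm_div, hzd, Complex.norm_real, Real.norm_eq_abs, abs_of_pos hd0,
      div_self hd0.ne']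
  have hee : (starRingEnd ℂ) e * e = 1 := by
    have hn : Complex.normSq e = 1 := by
      rw [Complex.normSq_eq_norm_sq, he]; norm_num
    rw [mul_comm, Complex.mul_conj, hn, Complex.ofReal_one]
  set p : ℂ := ⟨d/2, h⟩ with hpdef
  have hpns : Complex.normSq p = 1 := by
    rw [Complex.normSq_apply]
    show d/2 * (d/2) + h * h = 1
    nlinarith [hh]
  have hpn : ‖p‖ = 1 := by
    rw [Complex.norm_def, hpns, Real.sqrt_one]
  set q : ℂ := ⟨d/2, -h⟩ with hqdef
  have hq : (starRingEnd ℂ) p = q := by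
    apply Complex.ext
    · rw [Complex.conj_re]
    · rw [Complex.conj_im]
  have hqn : ‖q‖ = 1 := by rw [← hq, RCLike.norm_conj, hpn]
  have hqp : q * p = 1 := by
    rw [← hq, mul_comm, Complex.mul_conj, hpns, Complex.ofReal_one]
  have hpq : p * q = 1 := by rw [mul_comm, hqp]
  set c : ℂ := ⟨1 - δ, -(50*s)⟩ with hcdef
  set u₁ := e * p with hu₁def
  have hu₁ : ‖u₁‖ = 1 := by rw [hu₁def, norm_mul, he, hpn, one_mul]
  set u₂ := e * q with hu₂def
  have hu₂ : ‖u₂‖ = 1 := by rw [hu₂def, norm_mul, he, hqn, one_mul]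
  set w₁ := z₁ + e * (p * c) with hw₁def
  set w₂ := z₁ + e * (q * c) with hw₂def
  refine ⟨NearIntAux.vIso w₁ u₁ hu₁ ''
      {x | x 0 ∈ Set.Icc 0 (2*δ) ∧ x 1 ∈ Set.Icc 0 (100*Real.sqrt δ)},
    NearIntAux.vIso w₂ u₂ hu₂ ''
      {x | x 0 ∈ Set.Icc 0 (2*δ) ∧ x 1 ∈ Set.Icc 0 (100*Real.sqrt δ)},
    ⟨NearIntAux.vIso w₁ u₁ hu₁, rfl⟩, ⟨NearIntAux.vIso w₂ u₂ hu₂, rfl⟩, ?_⟩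
  rintro x ⟨hx1, hx2⟩
  rw [mem_sphere] at hx1
  -- from infDist to a distance bound
  have hsn : (Metric.sphere c₂ (1:ℝ)).Nonempty := NormedSpace.sphere_nonempty.mpr zero_le_one
  obtain ⟨yy, hyy, hyyd⟩ := (isCompact_sphere c₂ 1).exists_infDist_eq_dist hsn x
  rw [mem_sphere] at hyy
  have hr : |dist x c₂ - 1| ≤ δ := by
    calc |dist x c₂ - 1| = |dist x c₂ - dist yy c₂| := by rw [hyy]
    _ ≤ dist x yy := abs_dist_sub_le _ _ _
    _ ≤ δ := by rw [← hyyd]; exact hx2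
  set z := NearIntAux.phi.symm x with hzdef
  have hx' : x = NearIntAux.phi z := (NearIntAux.phi.apply_symm_apply x).symm
  have hz1 : dist z z₁ = 1 := by
    rw [hzdef, hz₁def, LinearIsometryEquiv.dist_map]; exact hx1
  have hz2d : dist z z₂ = dist x c₂ := by
    rw [hzdef, hz₂def, LinearIsometryEquiv.dist_map]
  set ζ := (starRingEnd ℂ) e * (z - z₁) with hζdef
  have hζn : ‖ζ‖ = 1 := by
    rw [hζdef, norm_mul, RCLike.norm_conj, he, one_mul, ← dist_eq_norm, hz1]
  have hζd : ‖ζ - (d:ℂ)‖ = dist x c₂ := by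
    have hde : (d:ℂ) * e = z₂ - z₁ := by
      rw [hedef, mul_div_cancel₀ _ hdC]
    have e4 : ζ - (d:ℂ) = (starRingEnd ℂ) e * (z - z₂) := by
      rw [hζdef]
      linear_combination (-(starRingEnd ℂ e)) * hde + (d:ℂ) * hee
    rw [e4, norm_mul, RCLike.norm_conj, he, one_mul, ← dist_eq_norm, hz2d]
  set X := ζ.re with hXdef
  set Y := ζ.im with hYdef
  have hXY : X^2 + Y^2 = 1 := by
    have h1 : Complex.normSq ζ = 1 := by
      rw [Complex.normSq_eq_norm_sq, hζn]; norm_num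
    rw [Complex.normSq_apply] at h1
    linear_combination h1
  have hr2 : (dist x c₂)^2 = (X - d)^2 + Y^2 := by
    have h2 : Complex.normSq (ζ - (d:ℂ)) = (dist x c₂)^2 := by
      rw [Complex.normSq_eq_norm_sq, hζd]
    rw [Complex.normSq_apply, Complex.sub_re, Complex.sub_im, Complex.ofReal_re,
      Complex.ofReal_im] at h2
    linear_combination -h2
  have hX : |X - d/2| ≤ s^2*(2+s^2)/(2*d) :=
    NearIntAux.x_range δ s d (dist x c₂) X Y hδs hs0 hsd dist_nonneg hr hXY hr2
  rcases le_total 0 Y with hY | hY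
  · left
    obtain ⟨⟨hm1, hm2⟩, ht⟩ :=
      NearIntAux.main_real δ s d h X Y hδs hs0 hs1 hsd hd2 hh0 hh hXY hY hX
    rw [abs_le] at ht
    rw [hx']
    have hcu : (starRingEnd ℂ) u₁ = (starRingEnd ℂ) e * q := by
      rw [hu₁def, map_mul, hq]
    have hE : (starRingEnd ℂ) u₁ * (z - w₁) = q * ζ - c := by
      rw [hcu, hw₁def, hζdef]
      linear_combination (-(c * (q * p))) * hee + (-c) * hqp
    apply NearIntAux.mem_rect
    · rw [hE]
      have hre : (q * ζ - c).re = (d/2*X + h*Y) - (1 - δ) := by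
        rw [Complex.sub_re, Complex.mul_re]
        show d/2 * X - (-h) * Y - (1 - δ) = d/2*X + h*Y - (1 - δ)
        ring
      rw [hre]
      constructor
      · linarith [hm1]
      · linarith [hm2]
    · rw [hE]
      have him : (q * ζ - c).im = (d/2*Y - h*X) + 50*s := by
        rw [Complex.sub_im, Complex.mul_im]
        show d/2 * Y + (-h) * X - (-(50*s)) = (d/2*Y - h*X) + 50*s
        ring
      rw [him]
      constructor
      · linarith [ht.1]
      · linarith [ht.2]
  · right
    have hXY' : X^2 + (-Y)^2 = 1 := by linear_combination hXY
    have hY' : 0 ≤ -Y := by linarith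
    obtain ⟨⟨hm1, hm2⟩, ht⟩ :=
      NearIntAux.main_real δ s d h X (-Y) hδs hs0 hs1 hsd hd2 hh0 hh hXY' hY' hX
    rw [abs_le] at ht
    rw [hx']
    have hcu : (starRingEnd ℂ) u₂ = (starRingEnd ℂ) e * p := by
      rw [hu₂def, map_mul, ← hq, Complex.conj_conj]
    have hE : (starRingEnd ℂ) u₂ * (z - w₂) = p * ζ - c := by
      rw [hcu, hw₂def, hζdef]
      linear_combination (-(c * (p * q))) * hee + (-c) * hpq
    apply NearIntAux.mem_rect
    · rw [hE]
      have hre : (p * ζ - c).re = (d/2*X + h*(-Y)) - (1 - δ) := by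
        rw [Complex.sub_re, Complex.mul_re]
        show d/2 * X - h * Y - (1 - δ) = (d/2*X + h*(-Y)) - (1 - δ)
        ring
      rw [hre]
      constructor
      · linarith [hm1]
      · linarith [hm2]
    · rw [hE]
      have him : (p * ζ - c).im = -(d/2*(-Y) - h*X) + 50*s := by
        rw [Complex.sub_im, Complex.mul_im]
        show d/2 * Y + h * X - (-(50*s)) = -(d/2*(-Y) - h*X) + 50*s
        ring
      rw [him]
      constructor
      · linarith [ht.2]
      · linarith [ht.1]
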